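/- If ⟨·,·⟩ is a positive-definite (or negative-definite) inner product on a 3-dimensional real vector space V, then every Cotton-like tensor C on V whose kernel D = {u : C(u,·,·)=0} is nonzero must vanish identically; equivalently, a nonzero Cotton-like tensor on a definite 3-dimensional space has trivial kernel. -/

import Mathlib

open Module LinearMap

set_option maxHeartbeats 1600000 in
theorem stmt12 {V : Type*} [AddCommGroup V] [Module ℝ V] [FiniteDimensional ℝ V]
    (hdim : Module.finrank ℝ V = 3)
    (B : V →ₗ[ℝ] V →ₗ[ℝ] ℝ)
    (hBsymm : ∀ x y : V, B x y = B y x)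
    -- B is positive definite or negative definite:
    (hBdef : (∀ x : V, x ≠ 0 → 0 < B x x) ∨ (∀ x : V, x ≠ 0 → B x x < 0))
    (C : V →ₗ[ℝ] V →ₗ[ℝ] V →ₗ[ℝ] ℝ)
    (hCanti : ∀ X Y Z : V, C X Y Z = - C Y X Z)
    (hCcyc : ∀ X Y Z : V, C X Y Z + C Y Z X + C Z X Y = 0)
    (hCtrace : ∀ (Y : V) (T : V →ₗ[ℝ] V),
      (∀ X Z : V, B (T X) Z = C X Y Z) → LinearMap.trace ℝ V T = 0)
    -- the kernel D is nonzero: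
    (hker : ∃ u : V, u ≠ 0 ∧ ∀ Y Z : V, C u Y Z = 0) :
    C = 0 := by
  obtain ⟨u, hu0, hu⟩ := hker
  have hBne : ∀ x : V, x ≠ 0 → B x x ≠ 0 := by
    intro x hx
    rcases hBdef with h | h
    · exact (h x hx).ne'
    · exact (h x hx).ne
  have ku2 : ∀ X Z : V, C X u Z = 0 := fun X Z => by rw [hCanti, hu]; ring
  have ku3 : ∀ X Y : V, C X Y u = 0 := fun X Y => by
    have h := hCcyc X Y u
    rw [ku2 Y X, hu X Y] at h; linarith
  -- the orthogonal complement of u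
  set W : Submodule ℝ V := LinearMap.ker (B u) with hWdef
  have hW2 : Module.finrank ℝ W = 2 := by
    have hsurj : Function.Surjective (B u) := by
      intro c
      refine ⟨(c / B u u) • u, ?_⟩
      have := hBne u hu0
      simp [div_mul_eq_mul_div]
      field_simp
    have h1 : LinearMap.range (B u) = ⊤ := LinearMap.range_eq_top.2 hsurj
    have h2 := LinearMap.finrank_range_add_finrank_ker (B u)
    rw [h1] at h2
    rw [finrank_top ℝ ℝ, Module.finrank_self, hdim] at h2
    rw [hWdef]
    omega
  -- an orthogonal basis of W
  have hB'symm : LinearMap.IsSymm (LinearMap.BilinForm.restrict B W) := by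
    constructor
    intro x y
    simp only [LinearMap.BilinForm.restrict_apply, RingHom.id_apply]
    exact hBsymm _ _
  obtain ⟨v0, hv0⟩ := LinearMap.BilinForm.exists_orthogonal_basis hB'symm
  set v : Basis (Fin 2) ℝ W := v0.reindex (finCongr hW2) with hvdef
  have hvortho : ∀ i j : Fin 2, i ≠ j → B (v i : V) (v j : V) = 0 := by
    intro i j hij
    have := hv0 (i := (finCongr hW2).symm i) (j := (finCongr hW2).symm j)
      (by simpa [Fin.ext_iff] using hij)
    simpa [hvdef, Module.Basis.reindex_apply, LinearMap.BilinForm.restrict, Function.onFun, LinearMap.domRestrict₁₂_apply] using this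
  -- combine into a basis of V
  set f : Fin 3 → V := Fin.cons u (fun i : Fin 2 => (v i : V)) with hfdef
  have hmemW : ∀ i : Fin 2, ((v i : V)) ∈ W := fun i => (v i).2
  have hli : LinearIndependent ℝ f := by
    rw [hfdef, linearIndependent_fin_cons]
    constructor
    · have := v.linearIndependent.map' W.subtype (Submodule.ker_subtype W)
      exact this
    · intro hmem
      have hsub : Submodule.span ℝ (Set.range fun i : Fin 2 => (v i : V)) ≤ W := by
        rw [Submodule.span_le]
        rintro x ⟨i, rfl⟩
        exact hmemW i
      have : u ∈ W := hsub hmem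
      rw [hWdef, LinearMap.mem_ker] at this
      exact hBne u hu0 this
  have hcard : Fintype.card (Fin 3) = Module.finrank ℝ V := by simp [hdim]
  set b : Basis (Fin 3) ℝ V := basisOfLinearIndependentOfCardEqFinrank hli hcard with hbdef
  have hb : ⇑b = f := coe_basisOfLinearIndependentOfCardEqFinrank hli hcard
  have hb0 : b 0 = u := by rw [hb]; rfl
  have hb1 : b 1 = (v 0 : V) := by rw [hb]; rfl
  have hb2 : b 2 = (v 1 : V) := by rw [hb]; rfl
  have hortho : ∀ i j : Fin 3, i ≠ j → B (b i) (b j) = 0 := by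
    have h01 : B (b 0) (b 1) = 0 := by
      rw [hb0, hb1]; exact (hmemW 0)
    have h02 : B (b 0) (b 2) = 0 := by
      rw [hb0, hb2]; exact (hmemW 1)
    have h12 : B (b 1) (b 2) = 0 := by
      rw [hb1, hb2]; exact hvortho 0 1 (by decide)
    intro i j hij
    fin_cases i <;> fin_cases j <;>
      first
        | exact absurd rfl hij
        | assumption
        | (rw [hBsymm]; assumption)
  have dne : ∀ i : Fin 3, B (b i) (b i) ≠ 0 := fun i => hBne (b i) (b.ne_zero i)
  -- the trace identity
  have star : ∀ Y : V, ∑ i : Fin 3, (B (b i) (b i))⁻¹ * C (b i) Y (b i) = 0 := by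
    intro Y
    set φ : Fin 3 → (V →ₗ[ℝ] ℝ) := fun i =>
      { toFun := fun X => C X Y (b i)
        map_add' := fun x y => by simp
        map_smul' := fun c x => by simp } with hφdef
    set T : V →ₗ[ℝ] V :=
      ∑ i : Fin 3, ((B (b i) (b i))⁻¹ • φ i).smulRight (b i) with hTdef
    have hTX : ∀ X : V, T X = ∑ i : Fin 3, ((B (b i) (b i))⁻¹ * C X Y (b i)) • b i := by
      intro X
      rw [hTdef]
      simp [hφdef, LinearMap.sum_apply, LinearMap.smulRight_apply]
    have hT : ∀ X Z : V, B (T X) Z = C X Y Z := by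
      intro X Z
      have hfun : B (T X) = C X Y := by
        refine b.ext fun j => ?_
        rw [hTX]
        rw [map_sum]
        simp only [map_smul, smul_eq_mul, LinearMap.sum_apply, LinearMap.smul_apply]
        rw [Finset.sum_eq_single j]
        · field_simp [dne j]
          try ring
        · intro i _ hij
          rw [hortho i j hij]; ring
        · intro h; exact absurd (Finset.mem_univ j) h
      rw [hfun]
    have htr := hCtrace Y T hT
    rw [LinearMap.trace_eq_matrix_trace ℝ b T, Matrix.trace] at htr
    have hdiag : ∀ i : Fin 3,
        Matrix.diag (LinearMap.toMatrix b b T) i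
          = (B (b i) (b i))⁻¹ * C (b i) Y (b i) := by
      intro i
      rw [Matrix.diag_apply, LinearMap.toMatrix_apply, hTX, map_sum]
      simp [Finsupp.single_apply]
    rw [Finset.sum_congr rfl (fun i _ => hdiag i)] at htr
    exact htr
  -- key vanishing
  clear_value b
  clear hb hbdef hb1 hb2 hortho hvortho hmemW hli hcard
  have h212 : C (b 2) (b 1) (b 2) = 0 := by
    have h := star (b 1)
    rw [Fin.sum_univ_three, hb0, hu] at h
    have h11 : C (b 1) (b 1) (b 1) = 0 := by
      have := hCanti (b 1) (b 1) (b 1); linarith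
    rw [h11] at h
    have h' : (B (b 2) (b 2))⁻¹ * C (b 2) (b 1) (b 2) = 0 := by linarith
    rcases mul_eq_zero.mp h' with h'' | h''
    · exact absurd (inv_eq_zero.mp h'') (dne 2)
    · exact h''
  have h121 : C (b 1) (b 2) (b 1) = 0 := by
    have h := star (b 2)
    rw [Fin.sum_univ_three, hb0, hu] at h
    have h22 : C (b 2) (b 2) (b 2) = 0 := by
      have := hCanti (b 2) (b 2) (b 2); linarith
    rw [h22] at h
    have h' : (B (b 1) (b 1))⁻¹ * C (b 1) (b 2) (b 1) = 0 := by linarith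
    rcases mul_eq_zero.mp h' with h'' | h''
    · exact absurd (inv_eq_zero.mp h'') (dne 1)
    · exact h''
  have h12 : ∀ k : Fin 3, C (b 1) (b 2) (b k) = 0 := by
    intro k
    fin_cases k
    · exact show C (b 1) (b 2) (b 0) = 0 by rw [hb0]; exact ku3 _ _
    · exact h121
    · exact show C (b 1) (b 2) (b 2) = 0 by
        have := hCanti (b 1) (b 2) (b 2); rw [h212] at this; linarith
  have hall : ∀ i j k : Fin 3, C (b i) (b j) (b k) = 0 := by
    have hself : ∀ X Z : V, C X X Z = 0 := fun X Z => by
      have := hCanti X X Z; linarith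
    intro i j k
    fin_cases i <;> fin_cases j
    · exact hself _ _
    · exact show C (b 0) (b 1) (b k) = 0 by rw [hb0]; exact hu _ _
    · exact show C (b 0) (b 2) (b k) = 0 by rw [hb0]; exact hu _ _
    · exact show C (b 1) (b 0) (b k) = 0 by rw [hb0]; exact ku2 _ _
    · exact hself _ _
    · exact h12 k
    · exact show C (b 2) (b 0) (b k) = 0 by rw [hb0]; exact ku2 _ _
    · exact show C (b 2) (b 1) (b k) = 0 by
        have := hCanti (b 2) (b 1) (b k); rw [h12 k] at this; linarith
    · exact hself _ _
  refine b.ext fun i => b.ext fun j => b.ext fun k => ?_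
  simpa using hall i j k
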